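/- arXiv:2107.05069 — 6 statements merged into one kernel-verified Lean document; each statement's English description precedes it below -/
import Mathlib

section
/- If a logic ⊢ has a τ-algebraic semantics, then for every equation ε ≈ δ in τ and every formula φ(v, z⃗), the rules x, φ(ε, z⃗) ⊢ φ(δ, z⃗) and x, φ(δ, z⃗) ⊢ φ(ε, z⃗) are valid in ⊢. -/
/-- An algebraic signature: a type of operation symbols with arities. -/
structure Sig : Type 1 where
  Op : Type
  ar : Op → ℕ

/-- Formulas (terms) over a signature, with variables indexed by ℕ. -/
inductive Fm (L : Sig) : Type where
  | var : ℕ → Fm L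
  | op : (f : L.Op) → (Fin (L.ar f) → Fm L) → Fm L

/-- An algebra for the signature `L`. -/
structure Alg (L : Sig) : Type 1 where
  carrier : Type
  interp : (f : L.Op) → (Fin (L.ar f) → carrier) → carrier

/-- Evaluation of a formula in an algebra under a valuation of the variables. -/
def Fm.eval {L : Sig} (A : Alg L) (v : ℕ → A.carrier) : Fm L → A.carrier
  | .var n => v n
  | .op f as => A.interp f (fun i => (as i).eval A v)

/-- Substitution (endomorphism of the formula algebra). -/
def Fm.subst {L : Sig} (σ : ℕ → Fm L) : Fm L → Fm L
  | .var n => σ n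
  | .op f as => .op f (fun i => (as i).subst σ)

/-- The set of variables occurring in a formula. -/
def Fm.vars {L : Sig} : Fm L → Set ℕ
  | .var n => {n}
  | .op _ as => ⋃ i, (as i).vars

/-- Substitute the formula `ψ` for the variable `v` in `φ`. -/
def Fm.subst1 {L : Sig} (v : ℕ) (ψ : Fm L) (φ : Fm L) : Fm L :=
  φ.subst (fun n => if n = v then ψ else .var n)

/-- A logic: a substitution-invariant (finitary or not) consequence relation on formulas. -/
structure Logic (L : Sig) : Type where
  deriv : Set (Fm L) → Fm L → Prop
  axm : ∀ Γ φ, φ ∈ Γ → deriv Γ φ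
  mono : ∀ Γ Δ φ, Γ ⊆ Δ → deriv Γ φ → deriv Δ φ
  cut : ∀ Γ Δ φ, deriv Γ φ → (∀ γ ∈ Γ, deriv Δ γ) → deriv Δ φ
  substInv : ∀ (σ : ℕ → Fm L) Γ φ, deriv Γ φ → deriv (Fm.subst σ '' Γ) (φ.subst σ)

/-- A logical matrix: an algebra with a set of designated elements. -/
structure LMatrix (L : Sig) : Type 1 where
  alg : Alg L
  F : Set alg.carrier

/-- The consequence relation induced by a class of matrices. -/
def inducedBy {L : Sig} (M : Set (LMatrix L)) (Γ : Set (Fm L)) (φ : Fm L) : Prop :=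
  ∀ m ∈ M, ∀ v : ℕ → m.alg.carrier,
    (∀ γ ∈ Γ, γ.eval m.alg v ∈ m.F) → φ.eval m.alg v ∈ m.F

/-- `M` is a matrix semantics for the logic `ℒ`. -/
def IsMatrixSemantics {L : Sig} (ℒ : Logic L) (M : Set (LMatrix L)) : Prop :=
  ∀ Γ φ, ℒ.deriv Γ φ ↔ inducedBy M Γ φ

/-- Equational consequence relative to a class of algebras (equations as pairs of formulas). -/
def eqConseq {L : Sig} (K : Set (Alg L)) (Θ : Set (Fm L × Fm L)) (e : Fm L × Fm L) : Prop :=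
  ∀ A ∈ K, ∀ v : ℕ → A.carrier,
    (∀ p ∈ Θ, p.1.eval A v = p.2.eval A v) → e.1.eval A v = e.2.eval A v

/-- `τ(φ)`: the result of substituting `φ` for the variable `x` (= variable 0) in each
equation of `τ`. -/
def tauApp {L : Sig} (τ : Set (Fm L × Fm L)) (φ : Fm L) : Set (Fm L × Fm L) :=
  (fun e => (Fm.subst1 0 φ e.1, Fm.subst1 0 φ e.2)) '' τ

/-- `τ[Γ]`. -/
def tauAppSet {L : Sig} (τ : Set (Fm L × Fm L)) (Γ : Set (Fm L)) : Set (Fm L × Fm L) :=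
  ⋃ γ ∈ Γ, tauApp τ γ

/-- `τ` is a set of equations in the single variable `x` (= variable 0). -/
def IsUnivalent {L : Sig} (τ : Set (Fm L × Fm L)) : Prop :=
  ∀ e ∈ τ, e.1.vars ⊆ ({0} : Set ℕ) ∧ e.2.vars ⊆ ({0} : Set ℕ)

/-- `K` is a `τ`-algebraic semantics for `ℒ`: `Γ ⊢ φ` iff `τ[Γ] ⊨_K τ(φ)`. -/
def IsTauAlgSem {L : Sig} (ℒ : Logic L) (τ : Set (Fm L × Fm L)) (K : Set (Alg L)) : Prop :=
  IsUnivalent τ ∧ ∀ Γ φ, ℒ.deriv Γ φ ↔ ∀ e ∈ tauApp τ φ, eqConseq K (tauAppSet τ Γ) e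

/-- `ℒ` has an algebraic semantics (admits an equational completeness theorem). -/
def HasAlgSem {L : Sig} (ℒ : Logic L) : Prop :=
  ∃ (τ : Set (Fm L × Fm L)) (K : Set (Alg L)), IsTauAlgSem ℒ τ K

/-- `θ` is a congruence of the algebra `A`. -/
def IsCong {L : Sig} (A : Alg L) (θ : A.carrier → A.carrier → Prop) : Prop :=
  Equivalence θ ∧ ∀ (f : L.Op) (as bs : Fin (L.ar f) → A.carrier),
    (∀ i, θ (as i) (bs i)) → θ (A.interp f as) (A.interp f bs)

/-- The congruence of `A` generated by `X` (least congruence containing `X`). -/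
def congGen {L : Sig} (A : Alg L) (X : Set (A.carrier × A.carrier))
    (a c : A.carrier) : Prop :=
  ∀ θ, IsCong A θ → (∀ p ∈ X, θ p.1 p.2) → θ a c

/-- `p` is a unary polynomial function of `A`: `p(a) = φ^A(a, c⃗)` for a formula `φ(x, y⃗)`
and parameters `c⃗` from `A`. -/
def IsUnaryPoly {L : Sig} (A : Alg L) (p : A.carrier → A.carrier) : Prop :=
  ∃ (φ : Fm L) (c : ℕ → A.carrier),
    ∀ a, p a = φ.eval A (fun n => if n = 0 then a else c n)

/-- Compatibility of a relation with a set. -/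
def Compatible {L : Sig} (A : Alg L) (θ : A.carrier → A.carrier → Prop)
    (F : Set A.carrier) : Prop :=
  ∀ a c, θ a c → a ∈ F → c ∈ F

/-- The Leibniz congruence `Ω^A F`: the largest congruence of `A` compatible with `F`
(realized as the union of all congruences compatible with `F`). -/
def leibniz {L : Sig} (A : Alg L) (F : Set A.carrier) (a c : A.carrier) : Prop :=
  ∃ θ, IsCong A θ ∧ Compatible A θ F ∧ θ a c

/-- The formula algebra. -/
def FmAlg (L : Sig) : Alg L :=
  ⟨Fm L, fun f as => Fm.op f as⟩

/-- `ℒ` has no theorems. -/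
def LacksTheorems {L : Sig} (ℒ : Logic L) : Prop :=
  ¬ ∃ φ, ℒ.deriv ∅ φ

/-- `ℒ` is assertional. -/
def Assertional {L : Sig} (ℒ : Logic L) : Prop :=
  ∃ (M : Set (LMatrix L)) (φ : Fm L), IsMatrixSemantics ℒ M ∧ φ.vars ⊆ ({0} : Set ℕ) ∧
    ∀ m ∈ M, ∃ c : m.alg.carrier,
      (∀ a : m.alg.carrier, φ.eval m.alg (fun _ => a) = c) ∧ m.F = {c}

/-- `ℒ` is almost assertional. -/
def AlmostAssertional {L : Sig} (ℒ : Logic L) : Prop :=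
  LacksTheorems ℒ ∧
  ∃ (M : Set (LMatrix L)) (φ : Fm L), IsMatrixSemantics ℒ M ∧ φ.vars ⊆ ({0} : Set ℕ) ∧
    ∀ m ∈ M, m.F.Nonempty → ∃ c : m.alg.carrier,
      (∀ a : m.alg.carrier, φ.eval m.alg (fun _ => a) = c) ∧ m.F = {c}

/-- Two formulas are logically equivalent in `ℒ`. -/
def LogEquiv {L : Sig} (ℒ : Logic L) (ε δ : Fm L) : Prop :=
  ∀ (φ : Fm L) (v : ℕ),
    ℒ.deriv {Fm.subst1 v ε φ} (Fm.subst1 v δ φ) ∧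
    ℒ.deriv {Fm.subst1 v δ φ} (Fm.subst1 v ε φ)


lemma Fm.eval_subst {L : Sig} (A : Alg L) (w : ℕ → A.carrier) (σ : ℕ → Fm L) :
    ∀ φ : Fm L, (φ.subst σ).eval A w = φ.eval A (fun n => (σ n).eval A w) := by
  intro φ
  induction φ with
  | var n => rfl
  | op f as ih => simp only [Fm.subst, Fm.eval]; congr 1; funext i; exact ih i

lemma Fm.subst1_self {L : Sig} : ∀ φ : Fm L, Fm.subst1 0 (Fm.var 0) φ = φ := by
  intro φ
  induction φ with
  | var n => simp only [Fm.subst1, Fm.subst]; split <;> simp_all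
  | op f as ih => simp only [Fm.subst1, Fm.subst] at *; congr 1; funext i; exact ih i

lemma tau_helper {L : Sig} (ℒ : Logic L) (τ : Set (Fm L × Fm L)) (K : Set (Alg L))
    (hsem : IsTauAlgSem ℒ τ K) (ε δ φ : Fm L) (v : ℕ)
    (h : ∀ A ∈ K, ∀ w : ℕ → A.carrier,
      (∀ p ∈ tauApp τ (Fm.var 0), p.1.eval A w = p.2.eval A w) →
      ε.eval A w = δ.eval A w) :
    ℒ.deriv {Fm.var 0, Fm.subst1 v ε φ} (Fm.subst1 v δ φ) := by
  rw [hsem.2]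
  rintro e' ⟨⟨α, β⟩, hαβ, rfl⟩ A hA w hw
  have hτx : ∀ p ∈ tauApp τ (Fm.var 0), p.1.eval A w = p.2.eval A w := by
    intro p hp
    exact hw p (Set.mem_biUnion (by simp [Set.mem_insert_iff]) hp)
  have hεδ : ε.eval A w = δ.eval A w := h A hA w hτx
  have hvaleq : (Fm.subst1 v ε φ).eval A w = (Fm.subst1 v δ φ).eval A w := by
    simp only [Fm.subst1, Fm.eval_subst]
    congr 1
    funext n
    by_cases hn : n = v <;> simp [hn, hεδ, Fm.eval]
  have hφε : ∀ p ∈ tauApp τ (Fm.subst1 v ε φ), p.1.eval A w = p.2.eval A w := by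
    intro p hp
    exact hw p (Set.mem_biUnion (by simp [Set.mem_insert_iff]) hp)
  have key := hφε (Fm.subst1 0 (Fm.subst1 v ε φ) α, Fm.subst1 0 (Fm.subst1 v ε φ) β)
    ⟨(α, β), hαβ, rfl⟩
  simp only [Fm.subst1, Fm.eval_subst] at key ⊢
  have hfun : (fun n => Fm.eval A w (if n = 0 then
        Fm.subst (fun m => if m = v then δ else Fm.var m) φ else Fm.var n)) =
      (fun n => Fm.eval A w (if n = 0 then
        Fm.subst (fun m => if m = v then ε else Fm.var m) φ else Fm.var n)) := by
    funext n
    by_cases hn : n = 0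
    · have := hvaleq
      simp only [Fm.subst1] at this
      simp only [hn, if_pos rfl]
      exact this.symm
    · simp [hn]
  rw [hfun]
  exact key

/-- If `ℒ` has a `τ`-algebraic semantics, then `x, φ(ε, z⃗) ⊣⊢ φ(δ, z⃗), x` for all
`ε ≈ δ ∈ τ` and all formulas `φ(v, z⃗)`. -/
theorem tau_alg_sem_congruence_rules {L : Sig} (ℒ : Logic L)
    (τ : Set (Fm L × Fm L)) (hK : ∃ K : Set (Alg L), IsTauAlgSem ℒ τ K) :
    ∀ e ∈ τ, ∀ (φ : Fm L) (v : ℕ),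
      ℒ.deriv {Fm.var 0, Fm.subst1 v e.1 φ} (Fm.subst1 v e.2 φ) ∧
      ℒ.deriv {Fm.var 0, Fm.subst1 v e.2 φ} (Fm.subst1 v e.1 φ) := by
  obtain ⟨K, hsem⟩ := hK
  intro e he φ v
  have hτx : ∀ A ∈ K, ∀ w : ℕ → A.carrier,
      (∀ p ∈ tauApp τ (Fm.var 0), p.1.eval A w = p.2.eval A w) →
      e.1.eval A w = e.2.eval A w := by
    intro A _ w hτ
    have := hτ (Fm.subst1 0 (Fm.var 0) e.1, Fm.subst1 0 (Fm.var 0) e.2)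
      ⟨e, he, rfl⟩
    simpa [Fm.subst1_self] using this
  exact ⟨tau_helper ℒ τ K hsem e.1 e.2 φ v hτx,
    tau_helper ℒ τ K hsem e.2 e.1 φ v (fun A hA w hw => (hτx A hA w hw).symm)⟩
end

section
/- A logic ⊢ has a τ-algebraic semantics if and only if for all sets of formulas Γ ∪ {φ}, whenever every pair (ε(φ), δ(φ)) with ε ≈ δ ∈ τ lies in the congruence θ(Γ, τ) of the formula algebra generated by { (ε(γ), δ(γ)) : ε ≈ δ ∈ τ, γ ∈ Γ }, it follows that Γ ⊢ φ. -/
section Aux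

variable {L : Sig}

theorem Fm.subst_congr {σ σ' : ℕ → Fm L} : ∀ t : Fm L,
    (∀ n ∈ t.vars, σ n = σ' n) → t.subst σ = t.subst σ'
  | .var n, h => h n rfl
  | .op f as, h => by
      simp only [Fm.subst]
      exact congrArg _ (funext fun i => Fm.subst_congr (as i)
        (fun n hn => h n (Set.mem_iUnion.2 ⟨i, hn⟩)))

theorem Fm.subst_subst (σ σ' : ℕ → Fm L) : ∀ t : Fm L,
    (t.subst σ).subst σ' = t.subst (fun n => (σ n).subst σ')
  | .var _ => rfl
  | .op f as => by
      simp only [Fm.subst]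
      exact congrArg _ (funext fun i => Fm.subst_subst σ σ' (as i))

theorem Fm.subst_var : ∀ t : Fm L, t.subst Fm.var = t
  | .var _ => rfl
  | .op f as => by
      simp only [Fm.subst]
      exact congrArg _ (funext fun i => Fm.subst_var (as i))

theorem Fm.subst1_subst {ε : Fm L} (hε : ε.vars ⊆ ({0} : Set ℕ)) (γ : Fm L) (σ : ℕ → Fm L) :
    (Fm.subst1 0 γ ε).subst σ = Fm.subst1 0 (γ.subst σ) ε := by
  unfold Fm.subst1
  rw [Fm.subst_subst]
  refine Fm.subst_congr ε (fun n hn => ?_)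
  have h0 : n = 0 := hε hn
  subst h0; simp

theorem congGen_isCong (A : Alg L) (X : Set (A.carrier × A.carrier)) :
    IsCong A (congGen A X) :=
  ⟨⟨fun a θ hθ _ => hθ.1.refl a,
    fun h θ hθ hX => hθ.1.symm (h θ hθ hX),
    fun h1 h2 θ hθ hX => hθ.1.trans (h1 θ hθ hX) (h2 θ hθ hX)⟩,
   fun f as bs h θ hθ hX => hθ.2 f as bs (fun i => h i θ hθ hX)⟩

theorem congGen_gen (A : Alg L) (X : Set (A.carrier × A.carrier)) {p}
    (hp : p ∈ X) : congGen A X p.1 p.2 :=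
  fun _ _ hX => hX p hp

theorem congGen_exact {A : Alg L} {X : Set (A.carrier × A.carrier)} {a b : A.carrier}
    (h : Quot.mk (congGen A X) a = Quot.mk (congGen A X) b) : congGen A X a b :=
  ((congGen_isCong A X).1.eqvGen_iff).1 (Quot.eqvGen_exact h)

/-- The quotient of the formula algebra by the congruence generated by `X`. -/
noncomputable def quotAlg (X : Set (Fm L × Fm L)) : Alg L :=
  ⟨Quot (congGen (FmAlg L) X),
   fun f as => Quot.mk _ ((FmAlg L).interp f (fun i => (as i).out))⟩

theorem quotAlg_eval (X : Set (Fm L × Fm L)) (σ : ℕ → Fm L)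
    (v : ℕ → (quotAlg X).carrier) (hv : ∀ n, v n = Quot.mk _ (σ n)) :
    ∀ t : Fm L, t.eval (quotAlg X) v = Quot.mk _ (t.subst σ)
  | .var n => hv n
  | .op f as => by
      have IH : ∀ i, (as i).eval (quotAlg X) v = Quot.mk _ ((as i).subst σ) :=
        fun i => quotAlg_eval X σ v hv (as i)
      show Quot.mk _ ((FmAlg L).interp f (fun i => ((as i).eval (quotAlg X) v).out)) =
        Quot.mk _ ((FmAlg L).interp f (fun i => (as i).subst σ))
      refine Quot.sound ((congGen_isCong (FmAlg L) X).2 f _ _ (fun i => ?_))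
      refine congGen_exact ?_
      exact (Quot.out_eq _).trans (IH i)

end Aux

/-- `ℒ` has a `τ`-algebraic semantics iff `Γ ⊢ φ` whenever `τ(φ) ⊆ θ(Γ, τ)`, the
congruence of the formula algebra generated by `{ (ε(γ), δ(γ)) : ε ≈ δ ∈ τ, γ ∈ Γ }`. -/
theorem tau_alg_sem_iff_congruence_condition {L : Sig} (ℒ : Logic L)
    (τ : Set (Fm L × Fm L)) (hτ : IsUnivalent τ) :
    (∃ K : Set (Alg L), IsTauAlgSem ℒ τ K) ↔
      ∀ (Γ : Set (Fm L)) (φ : Fm L),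
        (∀ e ∈ tauApp τ φ, congGen (FmAlg L) (tauAppSet τ Γ) e.1 e.2) →
        ℒ.deriv Γ φ := by
  constructor
  · rintro ⟨K, _, hK⟩ Γ φ hcg
    rw [hK Γ φ]
    intro e he A hA v hpre
    -- the kernel of evaluation is a congruence of the formula algebra
    have hcong : IsCong (FmAlg L) (fun s t : Fm L => s.eval A v = t.eval A v) :=
      ⟨⟨fun _ => rfl, Eq.symm, Eq.trans⟩,
       fun f as bs h => by
         show (Fm.op f as).eval A v = (Fm.op f bs).eval A v
         simp only [Fm.eval]
         exact congrArg _ (funext h)⟩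
    exact hcg e he _ hcong (fun p hp => hpre p hp)
  · intro hcond
    classical
    refine ⟨{A | ∃ Δ : Set (Fm L), (∀ ψ, ℒ.deriv Δ ψ → ψ ∈ Δ) ∧
        A = quotAlg (tauAppSet τ Δ)}, hτ, fun Γ φ => ⟨?_, ?_⟩⟩
    · rintro hder e he A hA v hpre
      obtain ⟨Δ, hΔ, rfl⟩ := hA
      set σ : ℕ → Fm L := fun n => (v n).out with hσ
      have hv : ∀ n, v n = Quot.mk _ (σ n) := fun n => (Quot.out_eq (v n)).symm
      have heval : ∀ t : Fm L, t.eval (quotAlg (tauAppSet τ Δ)) v = Quot.mk _ (t.subst σ) :=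
        quotAlg_eval _ σ v hv
      -- each substituted premise is in the theory Δ
      have hmem : ∀ γ ∈ Γ, γ.subst σ ∈ Δ := by
        intro γ hγ
        refine hΔ _ (hcond Δ (γ.subst σ) ?_)
        rintro e' ⟨p, hp, rfl⟩
        have hpΓ : (Fm.subst1 0 γ p.1, Fm.subst1 0 γ p.2) ∈ tauAppSet τ Γ :=
          Set.mem_iUnion₂.2 ⟨γ, hγ, ⟨p, hp, rfl⟩⟩
        have := hpre _ hpΓ
        simp only [heval] at this
        rw [Fm.subst1_subst (hτ p hp).1 γ σ, Fm.subst1_subst (hτ p hp).2 γ σ] at this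
        exact congGen_exact this
      have hφΔ : φ.subst σ ∈ Δ := by
        refine hΔ _ (ℒ.cut _ _ _ (ℒ.substInv σ Γ φ hder) ?_)
        rintro ψ ⟨γ, hγ, rfl⟩
        exact ℒ.axm _ _ (hmem γ hγ)
      obtain ⟨p, hp, rfl⟩ := he
      simp only [heval, Fm.subst1_subst (hτ p hp).1 φ σ, Fm.subst1_subst (hτ p hp).2 φ σ]
      have hmemΔ : ((Fm.subst1 0 (φ.subst σ) p.1, Fm.subst1 0 (φ.subst σ) p.2) : Fm L × Fm L)
          ∈ tauAppSet τ Δ :=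
        Set.mem_iUnion₂.2 ⟨φ.subst σ, hφΔ, Set.mem_image_of_mem _ hp⟩
      exact Quot.sound (congGen_gen (FmAlg L) _ hmemΔ)
    · intro hsem
      set Δ : Set (Fm L) := {ψ | ℒ.deriv Γ ψ} with hΔdef
      have hΔ : ∀ ψ, ℒ.deriv Δ ψ → ψ ∈ Δ :=
        fun ψ h => ℒ.cut Δ Γ ψ h (fun γ hγ => hγ)
      have hA : quotAlg (tauAppSet τ Δ) ∈
          {A | ∃ Δ : Set (Fm L), (∀ ψ, ℒ.deriv Δ ψ → ψ ∈ Δ) ∧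
            A = quotAlg (tauAppSet τ Δ)} := ⟨Δ, hΔ, rfl⟩
      set v : ℕ → (quotAlg (tauAppSet τ Δ)).carrier := fun n => Quot.mk _ (Fm.var n)
      have heval : ∀ t : Fm L, t.eval (quotAlg (tauAppSet τ Δ)) v = Quot.mk _ t := by
        intro t
        have := quotAlg_eval (tauAppSet τ Δ) Fm.var v (fun _ => rfl) t
        rwa [Fm.subst_var] at this
      have hpre : ∀ p ∈ tauAppSet τ Γ,
          p.1.eval (quotAlg (tauAppSet τ Δ)) v = p.2.eval (quotAlg (tauAppSet τ Δ)) v := by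
        intro p hp
        obtain ⟨γ, hγ, q, hq, rfl⟩ := Set.mem_iUnion₂.1 hp
        simp only [heval]
        have hmemΔ : ((Fm.subst1 0 γ q.1, Fm.subst1 0 γ q.2) : Fm L × Fm L)
            ∈ tauAppSet τ Δ :=
          Set.mem_iUnion₂.2 ⟨γ, ℒ.axm Γ γ hγ, Set.mem_image_of_mem _ hq⟩
        exact Quot.sound (congGen_gen (FmAlg L) _ hmemΔ)
      have hderΔ : ℒ.deriv Δ φ := by
        refine hcond Δ φ (fun e he => ?_)
        have := hsem e he _ hA v hpre
        simp only [heval] at this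
        exact congGen_exact this
      exact ℒ.cut Δ Γ φ hderΔ (fun γ hγ => hγ)
end

section
/- An almost assertional logic ⊢ has an algebraic semantics if and only if there exists a set of equations τ(x) such that (i) there is no substitution σ with σ(ε) = σ(δ) for all ε ≈ δ ∈ τ, and (ii) for every ε ≈ δ ∈ τ and formula φ(v, z⃗), x, φ(ε, z⃗) ⊣⊢ φ(δ, z⃗), x. -/
namespace Aux
variable {L : Sig}

theorem congGen_isCong (A : Alg L) (X : Set (A.carrier × A.carrier)) :
    IsCong A (congGen A X) := by
  constructor
  · constructor
    · intro a θ hθ _; exact hθ.1.refl a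
    · intro a b hab θ hθ hX; exact hθ.1.symm (hab θ hθ hX)
    · intro a b c hab hbc θ hθ hX; exact hθ.1.trans (hab θ hθ hX) (hbc θ hθ hX)
  · intro f as bs hall θ hθ hX
    exact hθ.2 f as bs (fun i => hall i θ hθ hX)

theorem congGen_le (A : Alg L) (X : Set (A.carrier × A.carrier))
    {θ : A.carrier → A.carrier → Prop} (hθ : IsCong A θ)
    (hX : ∀ p ∈ X, θ p.1 p.2) {a b : A.carrier} (h : congGen A X a b) : θ a b :=
  h θ hθ hX

theorem congGen_of_mem (A : Alg L) (X : Set (A.carrier × A.carrier))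
    {p : A.carrier × A.carrier} (hp : p ∈ X) : congGen A X p.1 p.2 :=
  fun θ _ hX => hX p hp

/-- update valuation at 0 -/
def upd (A : Alg L) (a : A.carrier) (p : ℕ → A.carrier) : ℕ → A.carrier :=
  fun n => if n = 0 then a else p n

/-- the "Leibniz" relation used for compatibility -/
def Lam (A : Alg L) (F : Set A.carrier) (a b : A.carrier) : Prop :=
  ∀ (φ : Fm L) (p : ℕ → A.carrier), (φ.eval A (upd A a p) ∈ F ↔ φ.eval A (upd A b p) ∈ F)

theorem eval_congr (A : Alg L) {u v : ℕ → A.carrier} :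
    ∀ φ : Fm L, (∀ n ∈ φ.vars, u n = v n) → φ.eval A u = φ.eval A v := by
  intro φ
  induction φ with
  | var n => intro h; exact h n rfl
  | op f as ih =>
      intro h
      simp only [Fm.eval]; congr 1; funext i
      exact ih i (fun n hn => h n (Set.mem_iUnion.2 ⟨i, hn⟩))

theorem eval_subst (A : Alg L) (σ : ℕ → Fm L) (v : ℕ → A.carrier) :
    ∀ φ : Fm L, (φ.subst σ).eval A v = φ.eval A (fun n => (σ n).eval A v) := by
  intro φ
  induction φ with
  | var n => rfl
  | op f as ih => simp only [Fm.subst, Fm.eval]; congr 1; funext i; exact ih i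

/-- one-step polynomial replacement inside an operation -/
theorem Lam_op_step (A : Alg L) (F : Set A.carrier) {x y : A.carrier}
    (hxy : Lam A F x y) (f : L.Op) (cs : Fin (L.ar f) → A.carrier) (i : Fin (L.ar f)) :
    Lam A F (A.interp f (Function.update cs i x)) (A.interp f (Function.update cs i y)) := by
  intro φ p
  -- build ψ and params q
  let σ : ℕ → Fm L := fun n =>
    if n = 0 then Fm.op f (fun j => if (j : ℕ) = (i : ℕ) then Fm.var 0 else Fm.var (2 * (j : ℕ) + 1))
    else Fm.var (2 * n)
  let ψ : Fm L := φ.subst σ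
  let q : ℕ → A.carrier := fun m =>
    if m % 2 = 0 then p (m / 2)
    else if h : (m - 1) / 2 < L.ar f then cs ⟨(m - 1) / 2, h⟩ else x
  have key : ∀ z : A.carrier, ψ.eval A (upd A z q) =
      φ.eval A (upd A (A.interp f (Function.update cs i z)) p) := by
    intro z
    rw [eval_subst]
    apply eval_congr
    intro n _
    by_cases hn : n = 0
    · subst hn
      simp only [σ, if_pos rfl, Fm.eval, upd, if_pos rfl]
      congr 1
      funext j
      by_cases hj : (j : ℕ) = (i : ℕ)
      · have : j = i := Fin.ext hj
        subst this
        simp [Fm.eval, upd, Function.update]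
      · have hji : j ≠ i := fun hc => hj (by rw [hc])
        simp only [if_neg hj, Fm.eval, upd, q]
        have h1 : (2 * (j : ℕ) + 1) ≠ 0 := by omega
        rw [if_neg h1]
        have h2 : (2 * (j : ℕ) + 1) % 2 = 1 := by omega
        rw [if_neg (by omega : ¬ (2 * (j : ℕ) + 1) % 2 = 0)]
        have h3 : (2 * (j : ℕ) + 1 - 1) / 2 = (j : ℕ) := by omega
        rw [Function.update_of_ne hji]
        simp only [h3]
        rw [dif_pos j.isLt]
    · simp only [σ, if_neg hn, Fm.eval, upd, q]
      rw [if_neg (by omega : ¬ (2 * n = 0)), if_pos (by omega : (2*n) % 2 = 0)]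
      have h2 : 2 * n / 2 = n := by omega
      rw [h2]
  rw [← key x, ← key y]
  exact hxy ψ q

theorem Lam_isCong (A : Alg L) (F : Set A.carrier) : IsCong A (Lam A F) := by
  constructor
  · constructor
    · intro a φ p; rfl
    · intro a b hab φ p; exact (hab φ p).symm
    · intro a b c hab hbc φ p; exact (hab φ p).trans (hbc φ p)
  · intro f as bs hall
    -- chain through hybrid tuples
    have main : ∀ m : ℕ, m ≤ L.ar f →
        Lam A F (A.interp f as)
          (A.interp f (fun j => if (j : ℕ) < m then bs j else as j)) := by
      intro m
      induction m with
      | zero =>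
          intro _
          have : (fun j : Fin (L.ar f) => if (j : ℕ) < 0 then bs j else as j) = as := by
            funext j; simp
          rw [this]; exact (fun φ p => Iff.rfl)
      | succ m ih =>
          intro hm
          have hmk : m < L.ar f := hm
          have step := Lam_op_step A F (hall ⟨m, hmk⟩) f
            (fun j : Fin (L.ar f) => if (j : ℕ) < m then bs j else as j) ⟨m, hmk⟩
          have e1 : Function.update (fun j : Fin (L.ar f) => if (j : ℕ) < m then bs j else as j)
              ⟨m, hmk⟩ (as ⟨m, hmk⟩) = (fun j : Fin (L.ar f) => if (j : ℕ) < m then bs j else as j) := by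
            funext j
            by_cases hj : j = ⟨m, hmk⟩
            · subst hj; simp [Function.update]
            · rw [Function.update_of_ne hj]
          have e2 : Function.update (fun j : Fin (L.ar f) => if (j : ℕ) < m then bs j else as j)
              ⟨m, hmk⟩ (bs ⟨m, hmk⟩) = (fun j : Fin (L.ar f) => if (j : ℕ) < m + 1 then bs j else as j) := by
            funext j
            by_cases hj : j = ⟨m, hmk⟩
            · subst hj; simp
            · rw [Function.update_of_ne hj]
              have hjm : (j : ℕ) ≠ m := fun hc => hj (Fin.ext hc)
              by_cases h2 : (j : ℕ) < m
              · rw [if_pos h2, if_pos (by omega)]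
              · rw [if_neg h2, if_neg (by omega)]
          rw [e1, e2] at step
          intro φ p
          exact (ih (Nat.le_of_succ_le hm) φ p).trans (step φ p)
    have fin := main (L.ar f) le_rfl
    have : (fun j : Fin (L.ar f) => if (j : ℕ) < L.ar f then bs j else as j) = bs := by
      funext j; rw [if_pos j.isLt]
    rwa [this] at fin

/-- quotient algebra by a congruence-generated relation -/
noncomputable def QAlg (A : Alg L) (θ : A.carrier → A.carrier → Prop) : Alg L :=
  ⟨Quot θ, fun f bs => Quot.mk θ (A.interp f (fun i => (bs i).out))⟩

theorem quot_mk_eq_iff {α : Type} {θ : α → α → Prop} (hθ : Equivalence θ) (a b : α) :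
    Quot.mk θ a = Quot.mk θ b ↔ θ a b := by
  constructor
  · intro h
    exact (Equivalence.eqvGen_iff hθ).1 (Quot.eqvGen_exact h)
  · exact Quot.sound

theorem eval_QAlg (A : Alg L) (θ : A.carrier → A.carrier → Prop) (hθ : IsCong A θ)
    (u : ℕ → A.carrier) :
    ∀ ψ : Fm L, ψ.eval (QAlg A θ) (fun n => Quot.mk θ (u n)) = Quot.mk θ (ψ.eval A u) := by
  intro ψ
  induction ψ with
  | var n => rfl
  | op f as ih =>
      simp only [Fm.eval, QAlg]
      apply Quot.sound
      apply hθ.2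
      intro i
      have h1 : Quot.mk θ (Fm.eval (QAlg A θ) (fun n => Quot.mk θ (u n)) (as i)).out
          = Quot.mk θ (Fm.eval A u (as i)) := by
        erw [Quot.out_eq]; exact ih i
      exact (quot_mk_eq_iff hθ.1 _ _).1 h1

theorem eval_fmAlg (σ : ℕ → Fm L) : ∀ φ : Fm L, φ.eval (FmAlg L) σ = φ.subst σ := by
  intro φ
  induction φ with
  | var n => rfl
  | op f as ih => simp only [Fm.eval, Fm.subst, FmAlg]; congr 1; funext i; exact ih i

theorem subst_var : ∀ φ : Fm L, φ.subst Fm.var = φ := by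
  intro φ
  induction φ with
  | var n => rfl
  | op f as ih => simp only [Fm.subst]; congr 1; funext i; exact ih i

theorem subst_subst (σ ρ : ℕ → Fm L) :
    ∀ φ : Fm L, (φ.subst σ).subst ρ = φ.subst (fun n => (σ n).subst ρ) := by
  intro φ
  induction φ with
  | var n => rfl
  | op f as ih => simp only [Fm.subst]; congr 1; funext i; exact ih i

theorem eval_subst1 (A : Alg L) (v : ℕ) (ψ φ : Fm L) (w : ℕ → A.carrier) :
    (Fm.subst1 v ψ φ).eval A w = φ.eval A (fun n => if n = v then ψ.eval A w else w n) := by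
  rw [Fm.subst1, eval_subst]
  congr 1; funext n; by_cases hn : n = v <;> simp [hn, Fm.eval]

theorem eval_univ (A : Alg L) {ε : Fm L} (hε : ε.vars ⊆ ({0} : Set ℕ))
    (w : ℕ → A.carrier) : ε.eval A w = ε.eval A (fun _ => w 0) := by
  apply eval_congr
  intro n hn
  have : n = 0 := hε hn
  subst this; rfl

theorem eval_subst1_univ (A : Alg L) {ψ : Fm L} (hψ : ψ.vars ⊆ ({0} : Set ℕ))
    (χ : Fm L) (w : ℕ → A.carrier) :
    (Fm.subst1 0 χ ψ).eval A w = ψ.eval A (fun _ => χ.eval A w) := by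
  rw [eval_subst1, eval_univ A hψ]
  simp

theorem subst1_var_self (v : ℕ) (ψ : Fm L) : Fm.subst1 v ψ (Fm.var v) = ψ := by
  simp [Fm.subst1, Fm.subst]

theorem subst1_var0 (ψ : Fm L) : Fm.subst1 0 (Fm.var 0) ψ = ψ := by
  have : (fun n => if n = 0 then Fm.var 0 else Fm.var n) = (Fm.var : ℕ → Fm L) := by
    funext n; by_cases h : n = 0 <;> simp [h]
  rw [Fm.subst1, this, subst_var]

/-- the generating set for the congruence on a matrix algebra -/
def XS (τ : Set (Fm L × Fm L)) (m : LMatrix L) (c : m.alg.carrier) :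
    Set (m.alg.carrier × m.alg.carrier) :=
  (fun e : Fm L × Fm L =>
    (Fm.eval m.alg (fun _ => c) e.1, Fm.eval m.alg (fun _ => c) e.2)) '' τ

theorem eval_subst1_at0 (A : Alg L) {ε : Fm L} (hε : ε.vars ⊆ ({0} : Set ℕ))
    (ψ : Fm L) (pr : ℕ → A.carrier) (c : A.carrier) :
    Fm.eval A (fun n => if n = 0 then c else pr n) (Fm.subst1 0 ε ψ)
      = Fm.eval A (upd A (Fm.eval A (fun _ => c) ε) pr) ψ := by
  rw [eval_subst1]
  apply eval_congr
  intro n _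
  by_cases hn : n = 0
  · subst hn
    show Fm.eval A (fun n => if n = 0 then c else pr n) ε
        = upd A (Fm.eval A (fun _ => c) ε) pr 0
    rw [eval_univ A hε]
    simp [upd]
  · simp [upd, hn]

theorem lam_of_X (ℒ : Logic L) (M : Set (LMatrix L)) (τ : Set (Fm L × Fm L))
    (m : LMatrix L) (c : m.alg.carrier)
    (hMS : IsMatrixSemantics ℒ M) (hm : m ∈ M) (hF : m.F = {c})
    (hUni : IsUnivalent τ)
    (hDeriv : ∀ e ∈ τ, ∀ (φ : Fm L) (v : ℕ),
      ℒ.deriv {Fm.var 0, Fm.subst1 v e.1 φ} (Fm.subst1 v e.2 φ) ∧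
      ℒ.deriv {Fm.var 0, Fm.subst1 v e.2 φ} (Fm.subst1 v e.1 φ)) :
    ∀ p ∈ XS τ m c, Lam m.alg m.F p.1 p.2 := by
  rintro p ⟨⟨ε, δ⟩, hτ, rfl⟩
  intro ψ pr
  dsimp only
  have hvar0 : Fm.eval m.alg (fun n => if n = 0 then c else pr n) (Fm.var 0) ∈ m.F := by
    show (if (0:ℕ) = 0 then c else pr 0) ∈ m.F
    simp [hF]
  have heps := eval_subst1_at0 m.alg ((hUni (ε, δ) hτ).1) ψ pr c
  have hdel := eval_subst1_at0 m.alg ((hUni (ε, δ) hτ).2) ψ pr c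
  constructor
  · intro hin
    have hder := (hDeriv (ε, δ) hτ ψ 0).1
    have := (hMS _ _).1 hder m hm (fun n => if n = 0 then c else pr n) ?_
    · rw [hdel] at this; exact this
    · intro γ hγ
      rcases hγ with h | h
      · subst h; exact hvar0
      · simp only [Set.mem_singleton_iff] at h; subst h; rw [heps]; exact hin
  · intro hin
    have hder := (hDeriv (ε, δ) hτ ψ 0).2
    have := (hMS _ _).1 hder m hm (fun n => if n = 0 then c else pr n) ?_
    · rw [heps] at this; exact this
    · intro γ hγ
      rcases hγ with h | h
      · subst h; exact hvar0
      · simp only [Set.mem_singleton_iff] at h; subst h; rw [hdel]; exact hin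

theorem compat_theta (ℒ : Logic L) (M : Set (LMatrix L)) (τ : Set (Fm L × Fm L))
    (m : LMatrix L) (c : m.alg.carrier)
    (hMS : IsMatrixSemantics ℒ M) (hm : m ∈ M) (hF : m.F = {c})
    (hUni : IsUnivalent τ)
    (hDeriv : ∀ e ∈ τ, ∀ (φ : Fm L) (v : ℕ),
      ℒ.deriv {Fm.var 0, Fm.subst1 v e.1 φ} (Fm.subst1 v e.2 φ) ∧
      ℒ.deriv {Fm.var 0, Fm.subst1 v e.2 φ} (Fm.subst1 v e.1 φ)) :
    ∀ a b, congGen m.alg (XS τ m c) a b → (a ∈ m.F ↔ b ∈ m.F) := by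
  intro a b hab
  have hl : Lam m.alg m.F a b :=
    congGen_le m.alg (XS τ m c) (Lam_isCong m.alg m.F)
      (lam_of_X ℒ M τ m c hMS hm hF hUni hDeriv) hab
  have := hl (Fm.var 0) (fun _ => a)
  simpa [Fm.eval, upd] using this

theorem mk_eq_of_tau' (τ : Set (Fm L × Fm L)) (m : LMatrix L) (c : m.alg.carrier)
    (φ₀ : Fm L) (hconst : ∀ a, Fm.eval m.alg (fun _ => a) φ₀ = c) :
    ∀ ε₁ δ₁ : Fm L, (ε₁, δ₁) ∈ insert ((Fm.var 0 : Fm L), φ₀) τ →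
      Quot.mk (congGen m.alg (XS τ m c)) (Fm.eval m.alg (fun _ => c) ε₁) =
      Quot.mk (congGen m.alg (XS τ m c)) (Fm.eval m.alg (fun _ => c) δ₁) := by
  rintro ε₁ δ₁ (hh | hh)
  · have h1 : ε₁ = Fm.var 0 := congrArg Prod.fst hh
    have h2 : δ₁ = φ₀ := congrArg Prod.snd hh
    subst h1; subst h2
    show Quot.mk _ ((fun _ => c) 0) = _
    rw [hconst c]
  · exact Quot.sound (congGen_of_mem m.alg (XS τ m c)
      (⟨(ε₁, δ₁), hh, rfl⟩ : _ ∈ XS τ m c))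

theorem main {L : Sig} (ℒ : Logic L)
    (h : AlmostAssertional ℒ) :
    HasAlgSem ℒ ↔
      ∃ τ : Set (Fm L × Fm L), IsUnivalent τ ∧
        (¬ ∃ σ : ℕ → Fm L, ∀ e ∈ τ, e.1.subst σ = e.2.subst σ) ∧
        (∀ e ∈ τ, ∀ (φ : Fm L) (v : ℕ),
          ℒ.deriv {Fm.var 0, Fm.subst1 v e.1 φ} (Fm.subst1 v e.2 φ) ∧
          ℒ.deriv {Fm.var 0, Fm.subst1 v e.2 φ} (Fm.subst1 v e.1 φ)) := by
  obtain ⟨hLT, M, φ₀, hMS, hφ₀, hM⟩ := h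
  constructor
  · -- forward
    rintro ⟨τ, K, hUni, hIff⟩
    refine ⟨τ, hUni, ?_, ?_⟩
    · rintro ⟨σ, hσ⟩
      apply hLT
      refine ⟨σ 0, ?_⟩
      rw [hIff]
      rintro e ⟨⟨ε, δ⟩, hτ, rfl⟩
      have h1 : Fm.subst1 0 (σ 0) ε = ε.subst σ := by
        rw [Fm.subst1, ← eval_fmAlg, ← eval_fmAlg]
        apply Aux.eval_congr
        intro n hn
        have h0 : n = 0 := (hUni (ε, δ) hτ).1 hn
        subst h0; simp; rfl
      have h2 : Fm.subst1 0 (σ 0) δ = δ.subst σ := by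
        rw [Fm.subst1, ← eval_fmAlg, ← eval_fmAlg]
        apply Aux.eval_congr
        intro n hn
        have h0 : n = 0 := (hUni (ε, δ) hτ).2 hn
        subst h0; simp; rfl
      intro A hA w hp
      dsimp only
      rw [h1, h2, hσ (ε, δ) hτ]
    · intro e he φ v
      have key : ∀ ε δ : Fm L, ((ε, δ) ∈ τ ∨ (δ, ε) ∈ τ) →
          ε.vars ⊆ ({0} : Set ℕ) → δ.vars ⊆ ({0} : Set ℕ) →
          ℒ.deriv {Fm.var 0, Fm.subst1 v ε φ} (Fm.subst1 v δ φ) := by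
        intro ε δ hmem hεv hδv
        rw [hIff]
        rintro e' ⟨⟨ε', δ'⟩, hτ', rfl⟩
        intro A hA w hp
        dsimp only
        have hx : ∀ p ∈ τ, Fm.eval A w p.1 = Fm.eval A w p.2 := by
          intro p hpτ
          have hmem1 : (Fm.subst1 0 (Fm.var 0) p.1, Fm.subst1 0 (Fm.var 0) p.2) ∈
              tauAppSet τ {Fm.var 0, Fm.subst1 v ε φ} :=
            Set.mem_biUnion (Set.mem_insert _ _) ⟨p, hpτ, rfl⟩
          have := hp _ hmem1
          dsimp only at this
          rwa [subst1_var0, subst1_var0] at this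
        have hy : ∀ p ∈ τ, Fm.eval A w (Fm.subst1 0 (Fm.subst1 v ε φ) p.1) =
            Fm.eval A w (Fm.subst1 0 (Fm.subst1 v ε φ) p.2) := by
          intro p hpτ
          exact hp _ (Set.mem_biUnion
            (Set.mem_insert_of_mem _ (Set.mem_singleton _)) ⟨p, hpτ, rfl⟩)
        have hXY : Fm.eval A w (Fm.subst1 v δ φ) = Fm.eval A w (Fm.subst1 v ε φ) := by
          rw [eval_subst1, eval_subst1]
          congr 1
          funext n
          by_cases hn : n = v
          · simp only [if_pos hn]
            rcases hmem with hmem | hmem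
            · exact (hx (ε, δ) hmem).symm
            · exact hx (δ, ε) hmem
          · simp only [if_neg hn]
        rw [eval_subst1_univ A (hUni (ε', δ') hτ').1, eval_subst1_univ A (hUni (ε', δ') hτ').2,
          hXY]
        have h5 := hy (ε', δ') hτ'
        rwa [eval_subst1_univ A (hUni (ε', δ') hτ').1,
          eval_subst1_univ A (hUni (ε', δ') hτ').2] at h5
      obtain ⟨ε, δ⟩ := e
      exact ⟨key ε δ (Or.inl he) (hUni _ he).1 (hUni _ he).2,
        key δ ε (Or.inr he) (hUni _ he).2 (hUni _ he).1⟩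
  · -- backward
    rintro ⟨τ, hUni, hNoUnif, hDeriv⟩
    classical
    have hUni' : IsUnivalent (insert ((Fm.var 0 : Fm L), φ₀) τ) := by
      rintro e (hh | hh)
      · subst hh
        exact ⟨fun n hn => hn, hφ₀⟩
      · exact hUni e hh
    refine ⟨insert ((Fm.var 0 : Fm L), φ₀) τ,
      {A' : Alg L | A' = FmAlg L ∨ ∃ m : LMatrix L, ∃ c : m.alg.carrier,
        m ∈ M ∧ (∀ a, Fm.eval m.alg (fun _ => a) φ₀ = c) ∧ m.F = {c} ∧
        A' = QAlg m.alg (congGen m.alg (XS τ m c))}, hUni', ?_⟩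
    intro Γ φ
    constructor
    · -- soundness
      intro hd
      have hΓne : Γ.Nonempty := by
        rcases Set.eq_empty_or_nonempty Γ with h0 | h0
        · exact absurd ⟨φ, h0 ▸ hd⟩ hLT
        · exact h0
      rintro e ⟨⟨ε, δ⟩, hεδ, rfl⟩
      intro A' hA' w hp
      simp only [Set.mem_setOf_eq] at hA'
      rcases hA' with rfl | ⟨m, c, hm, hconst, hF, rfl⟩
      · -- formula algebra: premises contradictory
        obtain ⟨γ₀, hγ₀⟩ := hΓne
        exfalso
        apply hNoUnif
        refine ⟨fun n => Fm.subst w (if n = 0 then γ₀ else Fm.var n), ?_⟩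
        rintro ⟨ε₁, δ₁⟩ hτ1
        have hmem : (Fm.subst1 0 γ₀ ε₁, Fm.subst1 0 γ₀ δ₁) ∈
            tauAppSet (insert ((Fm.var 0 : Fm L), φ₀) τ) Γ :=
          Set.mem_biUnion hγ₀ ⟨(ε₁, δ₁), Set.mem_insert_of_mem _ hτ1, rfl⟩
        have hthis := hp _ hmem
        dsimp only at hthis ⊢
        erw [eval_fmAlg, eval_fmAlg, Fm.subst1, Fm.subst1, subst_subst, subst_subst] at hthis
        exact hthis
      · -- quotient matrix
        have hθc : IsCong m.alg (congGen m.alg (XS τ m c)) := congGen_isCong _ _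
        have hcomp := compat_theta ℒ M τ m c hMS hm hF hUni hDeriv
        have hwu' : (fun n => Quot.mk (congGen m.alg (XS τ m c)) ((w n).out)) = w := by
          funext n; exact Quot.out_eq (w n)
        have hhom : ∀ ψ : Fm L, Fm.eval (QAlg m.alg (congGen m.alg (XS τ m c))) w ψ =
            Quot.mk (congGen m.alg (XS τ m c)) (Fm.eval m.alg (fun n => (w n).out) ψ) := by
          intro ψ
          have h0 := eval_QAlg m.alg _ hθc (fun n => (w n).out) ψ
          rwa [hwu'] at h0
        have hprem : ∀ γ ∈ Γ, Fm.eval m.alg (fun n => (w n).out) γ ∈ m.F := by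
          intro γ hγ
          have hmem : (Fm.subst1 0 γ (Fm.var 0), Fm.subst1 0 γ φ₀) ∈
              tauAppSet (insert ((Fm.var 0 : Fm L), φ₀) τ) Γ :=
            Set.mem_biUnion hγ ⟨(Fm.var 0, φ₀), Set.mem_insert _ _, rfl⟩
          have hq := hp _ hmem
          dsimp only at hq
          rw [subst1_var_self, hhom γ, eval_subst1_univ _ hφ₀ γ w, hhom γ,
            eval_QAlg m.alg _ hθc (fun _ => Fm.eval m.alg (fun n => (w n).out) γ) φ₀,
            hconst] at hq
          have hrel := (quot_mk_eq_iff hθc.1 _ _).1 hq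
          exact (hcomp _ _ hrel).2 (by rw [hF]; rfl)
        have hφF : Fm.eval m.alg (fun n => (w n).out) φ ∈ m.F := (hMS Γ φ).1 hd m hm _ hprem
        have hφc : Fm.eval m.alg (fun n => (w n).out) φ = c := by
          rwa [hF, Set.mem_singleton_iff] at hφF
        dsimp only
        rw [eval_subst1_univ _ (hUni' (ε, δ) hεδ).1 φ w,
          eval_subst1_univ _ (hUni' (ε, δ) hεδ).2 φ w, hhom φ, hφc,
          eval_QAlg m.alg _ hθc (fun _ => c) ε, eval_QAlg m.alg _ hθc (fun _ => c) δ]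
        exact mk_eq_of_tau' τ m c φ₀ hconst ε δ hεδ
    · -- completeness
      intro hyp
      have hΓne : Γ.Nonempty := by
        rcases Set.eq_empty_or_nonempty Γ with h0 | h0
        · exfalso
          subst h0
          obtain ⟨⟨ε, δ⟩, hτ1, hne⟩ : ∃ e ∈ τ,
              ¬ (Fm.subst (fun n => if n = 0 then φ else Fm.var n) e.1 =
                Fm.subst (fun n => if n = 0 then φ else Fm.var n) e.2) := by
            by_contra hcon
            push_neg at hcon
            exact hNoUnif ⟨_, hcon⟩
          apply hne
          have hthis := hyp (Fm.subst1 0 φ ε, Fm.subst1 0 φ δ)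
            ⟨(ε, δ), Set.mem_insert_of_mem _ hτ1, rfl⟩ (FmAlg L) (Or.inl rfl) Fm.var ?_
          · dsimp only at hthis
            rw [eval_fmAlg, eval_fmAlg, subst_var, subst_var] at hthis
            exact hthis
          · intro p hpm
            exfalso
            simp [tauAppSet] at hpm
        · exact h0
      apply (hMS Γ φ).2
      intro m hm u hprem
      rcases Set.eq_empty_or_nonempty m.F with hFe | hFne
      · obtain ⟨γ₀, hγ₀⟩ := hΓne
        have := hprem γ₀ hγ₀
        rw [hFe] at this
        exact absurd this (Set.notMem_empty _)
      · obtain ⟨c, hconst, hF⟩ := hM m hm hFne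
        have hθc : IsCong m.alg (congGen m.alg (XS τ m c)) := congGen_isCong _ _
        have hcomp := compat_theta ℒ M τ m c hMS hm hF hUni hDeriv
        have hBK : QAlg m.alg (congGen m.alg (XS τ m c)) ∈
            {A' : Alg L | A' = FmAlg L ∨ ∃ m : LMatrix L, ∃ c : m.alg.carrier,
              m ∈ M ∧ (∀ a, Fm.eval m.alg (fun _ => a) φ₀ = c) ∧ m.F = {c} ∧
              A' = QAlg m.alg (congGen m.alg (XS τ m c))} :=
          Or.inr ⟨m, c, hm, hconst, hF, rfl⟩
        have hhom : ∀ ψ : Fm L, Fm.eval (QAlg m.alg (congGen m.alg (XS τ m c)))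
            (fun n => Quot.mk _ (u n)) ψ = Quot.mk _ (Fm.eval m.alg u ψ) := by
          intro ψ
          exact eval_QAlg m.alg _ hθc u ψ
        have hpm : ∀ p ∈ tauAppSet (insert ((Fm.var 0 : Fm L), φ₀) τ) Γ,
            Fm.eval (QAlg m.alg (congGen m.alg (XS τ m c))) (fun n => Quot.mk _ (u n)) p.1 =
            Fm.eval (QAlg m.alg (congGen m.alg (XS τ m c))) (fun n => Quot.mk _ (u n)) p.2 := by
          intro p hpm
          rcases Set.mem_iUnion₂.1 hpm with ⟨γ, hγ, hp2⟩
          rcases hp2 with ⟨⟨ε₁, δ₁⟩, hτ1, rfl⟩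
          dsimp only
          have hγc : Fm.eval m.alg u γ = c := by
            have := hprem γ hγ
            rwa [hF, Set.mem_singleton_iff] at this
          erw [eval_subst1_univ _ (hUni' _ hτ1).1 γ _, eval_subst1_univ _ (hUni' _ hτ1).2 γ _,
            hhom γ, hγc,
            eval_QAlg m.alg _ hθc (fun _ => c) ε₁, eval_QAlg m.alg _ hθc (fun _ => c) δ₁]
          exact mk_eq_of_tau' τ m c φ₀ hconst ε₁ δ₁ hτ1
        have hphi := hyp (Fm.subst1 0 φ (Fm.var 0), Fm.subst1 0 φ φ₀)
          ⟨(Fm.var 0, φ₀), Set.mem_insert _ _, rfl⟩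
          (QAlg m.alg (congGen m.alg (XS τ m c))) hBK (fun n => Quot.mk _ (u n)) hpm
        dsimp only at hphi
        erw [subst1_var_self, hhom φ, eval_subst1_univ _ hφ₀ φ _, hhom φ,
          eval_QAlg m.alg _ hθc (fun _ => Fm.eval m.alg u φ) φ₀, hconst] at hphi
        have hrel := (quot_mk_eq_iff hθc.1 _ _).1 hphi
        exact (hcomp _ _ hrel).2 (by rw [hF]; rfl)

end Aux

/-- An almost assertional logic has an algebraic semantics iff there is a set of equations
`τ(x)` such that (i) no substitution unifies all equations of `τ`, and (ii)
`x, φ(ε, z⃗) ⊣⊢ φ(δ, z⃗), x` for all `ε ≈ δ ∈ τ` and formulas `φ(v, z⃗)`. -/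
theorem almost_assertional_alg_sem_iff {L : Sig} (ℒ : Logic L)
    (h : AlmostAssertional ℒ) :
    HasAlgSem ℒ ↔
      ∃ τ : Set (Fm L × Fm L), IsUnivalent τ ∧
        (¬ ∃ σ : ℕ → Fm L, ∀ e ∈ τ, e.1.subst σ = e.2.subst σ) ∧
        (∀ e ∈ τ, ∀ (φ : Fm L) (v : ℕ),
          ℒ.deriv {Fm.var 0, Fm.subst1 v e.1 φ} (Fm.subst1 v e.2 φ) ∧
          ℒ.deriv {Fm.var 0, Fm.subst1 v e.2 φ} (Fm.subst1 v e.1 φ)) := by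
  exact Aux.main ℒ h
end

section
/- A logic ⊢ is either assertional or almost assertional if and only if there is a formula ψ(x) such that y ⊢ ψ(x) and, for every formula φ(v, z⃗), the rule x, y, φ(x, z⃗) ⊢ φ(y, z⃗) is valid in ⊢. -/
namespace AAux
variable {L : Sig}

lemma subst_subst (σ τ : ℕ → Fm L) (φ : Fm L) :
    (φ.subst σ).subst τ = φ.subst (fun n => (σ n).subst τ) := by
  induction φ with
  | var n => rfl
  | op f as ih =>
      show Fm.op f _ = Fm.op f _
      congr 1; funext i; exact ih i

lemma subst_congr {σ τ : ℕ → Fm L} (φ : Fm L) (h : ∀ n ∈ φ.vars, σ n = τ n) :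
    φ.subst σ = φ.subst τ := by
  induction φ with
  | var n => exact h n (by simp [Fm.vars])
  | op f as ih =>
      show Fm.op f _ = Fm.op f _
      congr 1; funext i
      exact ih i (fun n hn => h n (by simp [Fm.vars]; exact ⟨i, hn⟩))

lemma subst_var (φ : Fm L) : φ.subst Fm.var = φ := by
  induction φ with
  | var n => rfl
  | op f as ih =>
      show Fm.op f _ = Fm.op f _
      congr 1; funext i; exact ih i

lemma eval_congr (A : Alg L) {u w : ℕ → A.carrier} (φ : Fm L)
    (h : ∀ n ∈ φ.vars, u n = w n) : φ.eval A u = φ.eval A w := by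
  induction φ with
  | var n => exact h n (by simp [Fm.vars])
  | op f as ih =>
      show A.interp f _ = A.interp f _
      congr 1; funext i
      exact ih i (fun n hn => h n (by simp [Fm.vars]; exact ⟨i, hn⟩))

lemma eval_subst (A : Alg L) (σ : ℕ → Fm L) (v : ℕ → A.carrier) (φ : Fm L) :
    (φ.subst σ).eval A v = φ.eval A (fun n => (σ n).eval A v) := by
  induction φ with
  | var n => rfl
  | op f as ih =>
      show A.interp f _ = A.interp f _
      congr 1; funext i; exact ih i

def varBound : Fm L → ℕ
  | .var n => n + 1
  | .op f as => Finset.univ.sup fun i => varBound (as i)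

lemma lt_varBound {φ : Fm L} {n : ℕ} (h : n ∈ φ.vars) : n < varBound φ := by
  induction φ with
  | var m =>
      simp [Fm.vars] at h; subst h; simp [varBound]
  | op f as ih =>
      simp [Fm.vars] at h
      obtain ⟨i, hi⟩ := h
      have h2 : varBound (as i) ≤ Finset.univ.sup (fun j => varBound (as j)) :=
        Finset.le_sup (f := fun j => varBound (as j)) (Finset.mem_univ i)
      exact lt_of_lt_of_le (ih i hi) h2

lemma subst1_var_self (v : ℕ) (α : Fm L) : Fm.subst1 v α (Fm.var v) = α := by
  simp [Fm.subst1, Fm.subst]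

lemma subst1_not_mem {v : ℕ} {φ : Fm L} (h : v ∉ φ.vars) (α : Fm L) :
    Fm.subst1 v α φ = φ := by
  unfold Fm.subst1
  rw [subst_congr φ (τ := Fm.var) ?_, subst_var]
  intro n hn
  have : n ≠ v := fun e => h (e ▸ hn)
  simp [this]

end AAux

namespace AAux
variable {L : Sig}

/-- Parameterized Leibniz-style relation over a set of formulas `T`. -/
def rel (T : Set (Fm L)) (α β : Fm L) : Prop :=
  ∀ (φ : Fm L) (v : ℕ), (Fm.subst1 v α φ ∈ T ↔ Fm.subst1 v β φ ∈ T)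

lemma rel_refl (T : Set (Fm L)) (α : Fm L) : rel T α α := fun _ _ => Iff.rfl

lemma rel_symm {T : Set (Fm L)} {α β : Fm L} (h : rel T α β) : rel T β α :=
  fun φ v => (h φ v).symm

lemma rel_trans {T : Set (Fm L)} {α β γ : Fm L} (h1 : rel T α β) (h2 : rel T β γ) :
    rel T α γ := fun φ v => (h1 φ v).trans (h2 φ v)

lemma rel_mem {T : Set (Fm L)} {α β : Fm L} (h : rel T α β) (hα : α ∈ T) : β ∈ T := by
  have := h (Fm.var 0) 0
  rw [subst1_var_self, subst1_var_self] at this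
  exact this.1 hα

/-- Key rewriting: substituting `subst1 w a χ` for `v` in `φ` can be expressed as a single
substitution of `a` for a fresh variable. -/
lemma subst1_decomp (φ χ a : Fm L) (v w : ℕ) (w' : ℕ)
    (hφ : w' ∉ φ.vars) (hχ : w' ∉ χ.vars) :
    Fm.subst1 v (Fm.subst1 w a χ) φ
      = Fm.subst1 w' a (Fm.subst1 v (Fm.subst1 w (Fm.var w') χ) φ) := by
  unfold Fm.subst1
  rw [subst_subst]
  apply subst_congr
  intro n hn
  by_cases hv : n = v
  · rw [if_pos hv, if_pos hv]
    rw [subst_subst]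
    apply subst_congr
    intro k hk
    have hkw' : k ≠ w' := fun e => hχ (e ▸ hk)
    by_cases hkw : k = w
    · simp [hkw, Fm.subst]
    · simp [hkw, Fm.subst, hkw']
  · have hnw' : n ≠ w' := fun e => hφ (e ▸ hn)
    rw [if_neg hv, if_neg hv]
    show Fm.var n = if n = w' then a else Fm.var n
    rw [if_neg hnw']

lemma rel_subst1 {T : Set (Fm L)} {a b : Fm L} (h : rel T a b) (χ : Fm L) (w : ℕ) :
    rel T (Fm.subst1 w a χ) (Fm.subst1 w b χ) := by
  intro φ v
  set w' := max (varBound φ) (varBound χ) with hw'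
  have hφ : w' ∉ φ.vars := fun hm => absurd (lt_varBound hm) (by omega)
  have hχ : w' ∉ χ.vars := fun hm => absurd (lt_varBound hm) (by omega)
  rw [subst1_decomp φ χ a v w w' hφ hχ, subst1_decomp φ χ b v w w' hφ hχ]
  exact h _ w'

lemma rel_op {T : Set (Fm L)} (f : L.Op) (as bs : Fin (L.ar f) → Fm L)
    (h : ∀ i, rel T (as i) (bs i)) : rel T (Fm.op f as) (Fm.op f bs) := by
  set w : ℕ := Finset.univ.sup
      (fun i : Fin (L.ar f) => max (varBound (as i)) (varBound (bs i))) with hwdef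
  have hwa : ∀ i, w ∉ (as i).vars := by
    intro i hm
    have h1 : max (varBound (as i)) (varBound (bs i)) ≤ w :=
      Finset.le_sup (f := fun i : Fin (L.ar f) => max (varBound (as i)) (varBound (bs i)))
        (Finset.mem_univ i)
    have := lt_varBound hm
    omega
  have hwb : ∀ i, w ∉ (bs i).vars := by
    intro i hm
    have h1 : max (varBound (as i)) (varBound (bs i)) ≤ w :=
      Finset.le_sup (f := fun i : Fin (L.ar f) => max (varBound (as i)) (varBound (bs i)))
        (Finset.mem_univ i)
    have := lt_varBound hm
    omega
  set c : ℕ → (Fin (L.ar f) → Fm L) := fun j i => if (i : ℕ) < j then bs i else as i with hc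
  have key : ∀ j : ℕ, rel T (Fm.op f as) (Fm.op f (c j)) := by
    intro j
    induction j with
    | zero =>
        have : c 0 = as := by funext i; simp [hc]
        rw [this]; exact rel_refl T _
    | succ j ih =>
        by_cases hj : j < L.ar f
        · refine rel_trans ih ?_
          set χ : Fm L := Fm.op f (fun i => if (i : ℕ) = j then Fm.var w else c j i) with hχ
          have e1 : Fm.subst1 w (as ⟨j, hj⟩) χ = Fm.op f (c j) := by
            show Fm.op f _ = Fm.op f _
            congr 1; funext i
            by_cases hij : (i : ℕ) = j
            · have hieq : i = ⟨j, hj⟩ := Fin.ext hij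
              subst hieq
              simp [hc, Fm.subst]
            · have hnm : w ∉ (c j i).vars := by
                by_cases h' : (i : ℕ) < j <;> simp [hc, h', hwa i, hwb i]
              simp only [hij, if_false, ite_false]
              exact subst1_not_mem hnm _
          have e2 : Fm.subst1 w (bs ⟨j, hj⟩) χ = Fm.op f (c (j + 1)) := by
            show Fm.op f _ = Fm.op f _
            congr 1; funext i
            by_cases hij : (i : ℕ) = j
            · have hieq : i = ⟨j, hj⟩ := Fin.ext hij
              subst hieq
              simp [hc, Fm.subst]
            · have hnm : w ∉ (c j i).vars := by
                by_cases h' : (i : ℕ) < j <;> simp [hc, h', hwa i, hwb i]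
              have hcc : c (j + 1) i = c j i := by
                have : ((i : ℕ) < j + 1) ↔ ((i : ℕ) < j) := by omega
                simp [hc, this]
              rw [hcc]
              simp only [hij, if_false, ite_false]
              exact subst1_not_mem hnm _
          rw [← e1, ← e2]
          exact rel_subst1 (h ⟨j, hj⟩) χ w
        · have : c (j + 1) = c j := by
            funext i
            have hi := i.isLt
            have hn2 : L.ar f ≤ j := le_of_not_gt hj
            have : ((i : ℕ) < j + 1) ↔ ((i : ℕ) < j) := by omega
            simp [hc, this]
          rw [this]; exact ih
  have hcb : c (L.ar f) = bs := by
    funext i; simp [hc, i.isLt]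
  rw [← hcb]; exact key (L.ar f)

end AAux

namespace AAux
variable {L : Sig}

def relSetoid (T : Set (Fm L)) : Setoid (Fm L) :=
  ⟨rel T, ⟨rel_refl T, rel_symm, rel_trans⟩⟩

noncomputable def QAlg (T : Set (Fm L)) : Alg L where
  carrier := Quotient (relSetoid T)
  interp := fun f qs => Quotient.mk (relSetoid T) (Fm.op f (fun i => (qs i).out))

lemma eval_QAlg (T : Set (Fm L)) (u : ℕ → Fm L) (φ : Fm L) :
    φ.eval (QAlg T) (fun n => Quotient.mk (relSetoid T) (u n))
      = Quotient.mk (relSetoid T) (φ.subst u) := by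
  induction φ with
  | var n => rfl
  | op f as ih =>
      show Quotient.mk (relSetoid T)
          (Fm.op f (fun i =>
            ((as i).eval (QAlg T) (fun n => Quotient.mk (relSetoid T) (u n))).out))
        = Quotient.mk (relSetoid T) (Fm.op f (fun i => (as i).subst u))
      apply Quotient.sound
      apply rel_op
      intro i
      refine Quotient.exact (s := relSetoid T) ?_
      refine (Quotient.out_eq _).trans ?_
      exact ih i

def thy (ℒ : Logic L) (Γ : Set (Fm L)) : Set (Fm L) := {φ | ℒ.deriv Γ φ}

noncomputable def theMat (ℒ : Logic L) (Γ : Set (Fm L)) : LMatrix L :=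
  ⟨QAlg (thy ℒ Γ), Quotient.mk (relSetoid (thy ℒ Γ)) '' thy ℒ Γ⟩

lemma mem_matF {T : Set (Fm L)} {α : Fm L} :
    Quotient.mk (relSetoid T) α ∈ Quotient.mk (relSetoid T) '' T ↔ α ∈ T := by
  constructor
  · rintro ⟨β, hβ, he⟩
    exact rel_mem (Quotient.exact he) hβ
  · intro h; exact ⟨α, h, rfl⟩

/-- The renaming substitution. -/
def ρfun (v W : ℕ) : ℕ → Fm L := fun n =>
  if n = v then .var (W + 2) else if n = 0 then .var W
  else if n = 1 then .var (W + 1) else .var n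

/-- The instantiating substitution. -/
def σfun (α β : Fm L) (W : ℕ) : ℕ → Fm L := fun n =>
  if n = 0 then α else if n = 1 then β
  else if n = W then .var 0 else if n = W + 1 then .var 1 else .var n

lemma key_subst (φ α β : Fm L) (v W : ℕ) (hW : 2 ≤ W) (hWφ : varBound φ ≤ W)
    (δ : Fm L) :
    (Fm.subst1 (W + 2) δ (φ.subst (ρfun v W))).subst (σfun α β W)
      = φ.subst (fun n => if n = v then δ.subst (σfun α β W) else Fm.var n) := by
  unfold Fm.subst1
  rw [subst_subst, subst_subst]
  apply subst_congr
  intro n hn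
  have hnW : n < W := lt_of_lt_of_le (lt_varBound hn) hWφ
  by_cases hv : n = v
  · simp [ρfun, hv, Fm.subst]
  · by_cases h0 : n = 0
    · subst h0
      have e1 : ¬ (W = W + 2) := by omega
      have e5 : ¬ (W = 0) := by omega
      have e6 : ¬ (W = 1) := by omega
      simp [ρfun, σfun, hv, Fm.subst, e1, e5, e6]
    · by_cases h1 : n = 1
      · subst h1
        have e1 : ¬ (W + 1 = W + 2) := by omega
        have e2 : ¬ (W + 1 = 0) := by omega
        have e3 : ¬ (W + 1 = 1) := by omega
        have e4 : ¬ (W + 1 = W) := by omega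
        simp [ρfun, σfun, hv, h0, Fm.subst, e1, e2, e3, e4]
        exact fun h => absurd h (by omega)
      · have e1 : ¬ (n = W + 2) := by omega
        have e2 : ¬ (n = W) := by omega
        have e3 : ¬ (n = W + 1) := by omega
        simp [ρfun, σfun, hv, h0, h1, Fm.subst, e1, e2, e3]

lemma lemmaA (ℒ : Logic L)
    (h2 : ∀ (φ : Fm L) (v : ℕ),
      ℒ.deriv {Fm.var 0, Fm.var 1, Fm.subst1 v (Fm.var 0) φ} (Fm.subst1 v (Fm.var 1) φ))
    (α β φ : Fm L) (v : ℕ) :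
    ℒ.deriv {α, β, Fm.subst1 v α φ} (Fm.subst1 v β φ) := by
  set W := max (varBound φ) 2 with hWdef
  have hW : 2 ≤ W := le_max_right _ _
  have hWφ : varBound φ ≤ W := le_max_left _ _
  have base := ℒ.substInv (σfun α β W) _ _ (h2 (φ.subst (ρfun v W)) (W + 2))
  have e0 : (Fm.var 0 : Fm L).subst (σfun α β W) = α := by simp [Fm.subst, σfun]
  have e1 : (Fm.var 1 : Fm L).subst (σfun α β W) = β := by simp [Fm.subst, σfun]
  have himg : Fm.subst (σfun α β W) ''
        {Fm.var 0, Fm.var 1, Fm.subst1 (W + 2) (Fm.var 0) (φ.subst (ρfun v W))}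
      = {α, β, Fm.subst1 v α φ} := by
    rw [Set.image_insert_eq, Set.image_insert_eq, Set.image_singleton, e0, e1,
      key_subst φ α β v W hW hWφ (Fm.var 0)]
    simp only [e0]
    rfl
  have hconc : (Fm.subst1 (W + 2) (Fm.var 1) (φ.subst (ρfun v W))).subst (σfun α β W)
      = Fm.subst1 v β φ := by
    rw [key_subst φ α β v W hW hWφ (Fm.var 1)]
    simp only [e1]
    rfl
  rw [himg, hconc] at base
  exact base

lemma lemmaB (ℒ : Logic L) (ψ : Fm L) (hv : ψ.vars ⊆ ({0} : Set ℕ))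
    (h1 : ℒ.deriv {Fm.var 1} ψ) (α β : Fm L) : ℒ.deriv {β} (Fm.subst1 0 α ψ) := by
  set σ : ℕ → Fm L := fun n => if n = 0 then α else if n = 1 then β else Fm.var n with hσ
  have base := ℒ.substInv σ _ _ h1
  have himg : Fm.subst σ '' {Fm.var 1} = {β} := by
    rw [Set.image_singleton]
    simp [Fm.subst, hσ]
  have hconc : ψ.subst σ = Fm.subst1 0 α ψ := by
    unfold Fm.subst1
    apply subst_congr
    intro n hn
    have : n = 0 := hv hn
    simp [this, hσ]
  rw [himg, hconc] at base
  exact base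

end AAux

namespace AAux
variable {L : Sig}

lemma eval_subst1_var (A : Alg L) (v : ℕ → A.carrier) (φ : Fm L) (v' k : ℕ) :
    (Fm.subst1 v' (Fm.var k) φ).eval A v
      = φ.eval A (fun n => if n = v' then v k else v n) := by
  unfold Fm.subst1
  rw [eval_subst]
  congr 1
  funext n
  by_cases h : n = v' <;> simp [h, Fm.eval]

end AAux

open AAux

/-- A logic is assertional or almost assertional iff there is a formula `ψ(x)` with
`y ⊢ ψ(x)` and the rules `x, y, φ(x, z⃗) ⊢ φ(y, z⃗)` are valid for every `φ(v, z⃗)`. -/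
theorem assertional_or_almost_assertional_iff {L : Sig} (ℒ : Logic L) :
    (Assertional ℒ ∨ AlmostAssertional ℒ) ↔
      ∃ ψ : Fm L, ψ.vars ⊆ ({0} : Set ℕ) ∧
        ℒ.deriv {Fm.var 1} ψ ∧
        ∀ (φ : Fm L) (v : ℕ),
          ℒ.deriv {Fm.var 0, Fm.var 1, Fm.subst1 v (Fm.var 0) φ}
            (Fm.subst1 v (Fm.var 1) φ) := by
  constructor
  · intro h
    obtain ⟨M, ψ, hsem, hvars, hsing⟩ :
        ∃ (M : Set (LMatrix L)) (ψ : Fm L), IsMatrixSemantics ℒ M ∧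
          ψ.vars ⊆ ({0} : Set ℕ) ∧
          ∀ m ∈ M, m.F.Nonempty → ∃ c : m.alg.carrier,
            (∀ a : m.alg.carrier, ψ.eval m.alg (fun _ => a) = c) ∧ m.F = {c} := by
      rcases h with ⟨M, ψ, hsem, hvars, hsing⟩ | ⟨_, M, ψ, hsem, hvars, hsing⟩
      exacts [⟨M, ψ, hsem, hvars, fun m hm _ => hsing m hm⟩, ⟨M, ψ, hsem, hvars, hsing⟩]
    refine ⟨ψ, hvars, ?_, ?_⟩
    · refine (hsem _ _).2 ?_
      intro m hm v hprem
      have h1 : v 1 ∈ m.F := hprem (Fm.var 1) rfl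
      obtain ⟨c, hc, hFc⟩ := hsing m hm ⟨_, h1⟩
      have heq : ψ.eval m.alg v = ψ.eval m.alg (fun _ => v 0) :=
        eval_congr m.alg ψ (fun n hn => by
          have h0 : n = 0 := hvars hn
          subst h0; rfl)
      rw [heq, hc, hFc]
      rfl
    · intro φ v'
      refine (hsem _ _).2 ?_
      intro m hm v hprem
      have h0 : v 0 ∈ m.F := hprem (Fm.var 0) (by simp)
      have h1 : v 1 ∈ m.F := hprem (Fm.var 1) (by simp)
      have hφx : (Fm.subst1 v' (Fm.var 0) φ).eval m.alg v ∈ m.F := hprem _ (by simp)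
      obtain ⟨c, hc, hFc⟩ := hsing m hm ⟨_, h0⟩
      rw [hFc, Set.mem_singleton_iff] at h0 h1
      have h01 : v 0 = v 1 := by rw [h0, h1]
      rw [eval_subst1_var] at hφx ⊢
      have hfun : (fun n => if n = v' then v 1 else v n)
          = (fun n => if n = v' then v 0 else v n) := by
        funext n
        by_cases h : n = v' <;> simp [h, h01]
      rw [hfun]
      exact hφx
  · rintro ⟨ψ, hvars, h1, h2⟩
    classical
    have hrelT : ∀ (Γ : Set (Fm L)) (α β : Fm L), α ∈ thy ℒ Γ → β ∈ thy ℒ Γ →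
        rel (thy ℒ Γ) α β := by
      intro Γ α β hα hβ
      have step : ∀ (a b : Fm L), a ∈ thy ℒ Γ → b ∈ thy ℒ Γ →
          ∀ (φ : Fm L) (v : ℕ),
            Fm.subst1 v a φ ∈ thy ℒ Γ → Fm.subst1 v b φ ∈ thy ℒ Γ := by
        intro a b ha hb φ v hx
        refine ℒ.cut _ _ _ (lemmaA ℒ h2 a b φ v) ?_
        rintro γ (rfl | rfl | rfl)
        exacts [ha, hb, hx]
      exact fun φ v => ⟨step α β hα hβ φ v, step β α hβ hα φ v⟩
    have hsem : IsMatrixSemantics ℒ (Set.range (theMat ℒ)) := by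
      intro Γ φ
      constructor
      · rintro hd m hm v hprem
        obtain ⟨Δ, rfl⟩ := hm
        obtain ⟨u, rfl⟩ : ∃ u : ℕ → Fm L,
            v = fun n => Quotient.mk (relSetoid (thy ℒ Δ)) (u n) :=
          ⟨fun n => (v n).out, funext fun n => (Quotient.out_eq _).symm⟩
        have key : ∀ ξ : Fm L,
            ξ.eval (theMat ℒ Δ).alg (fun n => Quotient.mk (relSetoid (thy ℒ Δ)) (u n))
                ∈ (theMat ℒ Δ).F ↔ ℒ.deriv Δ (ξ.subst u) := by
          intro ξ
          show ξ.eval (QAlg (thy ℒ Δ)) _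
              ∈ Quotient.mk (relSetoid (thy ℒ Δ)) '' thy ℒ Δ ↔ _
          rw [eval_QAlg]
          exact mem_matF
        rw [key φ]
        refine ℒ.cut _ _ _ (ℒ.substInv u Γ φ hd) ?_
        rintro γ' ⟨γ, hγ, rfl⟩
        exact (key γ).1 (hprem γ hγ)
      · intro hind
        have hid : ∀ ξ : Fm L,
            ξ.eval (theMat ℒ Γ).alg
                (fun n => Quotient.mk (relSetoid (thy ℒ Γ)) (Fm.var n))
              ∈ (theMat ℒ Γ).F ↔ ℒ.deriv Γ ξ := by
          intro ξ
          show ξ.eval (QAlg (thy ℒ Γ)) _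
              ∈ Quotient.mk (relSetoid (thy ℒ Γ)) '' thy ℒ Γ ↔ _
          rw [eval_QAlg, subst_var ξ]
          exact mem_matF
        exact (hid φ).1
          (hind (theMat ℒ Γ) ⟨Γ, rfl⟩ _ (fun γ hγ => (hid γ).2 (ℒ.axm Γ γ hγ)))
    have hsing : ∀ m ∈ Set.range (theMat ℒ), m.F.Nonempty →
        ∃ c : m.alg.carrier,
          (∀ a : m.alg.carrier, ψ.eval m.alg (fun _ => a) = c) ∧ m.F = {c} := by
      rintro m ⟨Δ, rfl⟩ ⟨q, hq⟩
      obtain ⟨α, hα, rfl⟩ := hq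
      refine ⟨Quotient.mk (relSetoid (thy ℒ Δ)) α, ?_, ?_⟩
      · intro a
        have hfa : (fun _ : ℕ => a)
            = fun n => Quotient.mk (relSetoid (thy ℒ Δ)) ((fun _ : ℕ => a.out) n) :=
          funext fun n => (Quotient.out_eq _).symm
        show ψ.eval (QAlg (thy ℒ Δ)) (fun _ => a)
            = Quotient.mk (relSetoid (thy ℒ Δ)) α
        rw [hfa, eval_QAlg]
        have hsub : ψ.subst (fun _ => a.out) = Fm.subst1 0 a.out ψ := by
          unfold Fm.subst1
          apply subst_congr
          intro n hn
          have h0 : n = 0 := hvars hn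
          simp [h0]
        rw [hsub]
        apply Quotient.sound
        have hmem : Fm.subst1 0 a.out ψ ∈ thy ℒ Δ := by
          refine ℒ.cut {α} Δ _ (lemmaB ℒ ψ hvars h1 a.out α) ?_
          rintro γ rfl
          exact hα
        exact hrelT Δ _ _ hmem hα
      · ext q
        constructor
        · rintro ⟨β, hβ, rfl⟩
          exact Set.mem_singleton_iff.2 (Quotient.sound (hrelT Δ β α hβ hα))
        · intro hq2
          replace hq2 : q = Quotient.mk (relSetoid (thy ℒ Δ)) α := hq2
          subst hq2
          exact ⟨α, hα, rfl⟩
    by_cases hth : ∃ θ, ℒ.deriv ∅ θ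
    · left
      obtain ⟨θ, hθ⟩ := hth
      refine ⟨Set.range (theMat ℒ), ψ, hsem, hvars, ?_⟩
      intro m hm
      obtain ⟨Δ, rfl⟩ := hm
      exact hsing _ ⟨Δ, rfl⟩ ⟨_, θ, ℒ.mono ∅ Δ θ (Set.empty_subset Δ) hθ, rfl⟩
    · right
      exact ⟨hth, Set.range (theMat ℒ), ψ, hsem, hvars, hsing⟩
end

section
/- If a logic ⊢ lacks theorems and M is a matrix semantics for ⊢, then the class N = { ⟨A,F⟩ ∈ M : F ≠ ∅ } ∪ { ⟨Fm, ∅⟩ } is also a matrix semantics for ⊢, where Fm is the formula algebra. -/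
/-- If `ℒ` lacks theorems and `M` is a matrix semantics for `ℒ`, then so is
`N = { ⟨A, F⟩ ∈ M : F ≠ ∅ } ∪ { ⟨Fm, ∅⟩ }`. -/
theorem matrix_semantics_no_theorems {L : Sig} (ℒ : Logic L) (M : Set (LMatrix L))
    (hthm : LacksTheorems ℒ) (hsem : IsMatrixSemantics ℒ M) :
    IsMatrixSemantics ℒ
      ({m ∈ M | m.F.Nonempty} ∪ {LMatrix.mk (FmAlg L) ∅}) := by
  intro Γ φ
  constructor
  · intro hd m hm v hv
    rcases hm with ⟨hmM, _⟩ | hm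
    · exact (hsem Γ φ).1 hd m hmM v hv
    · simp only [Set.mem_singleton_iff] at hm
      subst hm
      rcases Set.eq_empty_or_nonempty Γ with rfl | ⟨γ, hγ⟩
      · exact absurd ⟨φ, hd⟩ hthm
      · exact absurd (hv γ hγ) (Set.notMem_empty _)
  · intro h
    apply (hsem Γ φ).2
    intro m hm v hv
    rcases Set.eq_empty_or_nonempty m.F with hF | hF
    · rcases Set.eq_empty_or_nonempty Γ with rfl | ⟨γ, hγ⟩
      · exact absurd (h (LMatrix.mk (FmAlg L) ∅) (Or.inr rfl) Fm.var
          (by intro γ hγ; exact absurd hγ (Set.notMem_empty γ))) (Set.notMem_empty _)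
      · exact absurd (hv γ hγ) (by simp [hF])
    · exact h m (Or.inl ⟨hm, hF⟩) v hv
end

section
/- Every inconsistent logic has an algebraic semantics; an almost inconsistent logic has an algebraic semantics if and only if its language contains either two distinct constant symbols or a connective of arity at least one. -/
/-- `ℒ` is inconsistent. -/
def Inconsistent {L : Sig} (ℒ : Logic L) : Prop :=
  ∀ (Γ : Set (Fm L)) (φ : Fm L), ℒ.deriv Γ φ

/-- `ℒ` is almost inconsistent. -/
def AlmostInconsistent {L : Sig} (ℒ : Logic L) : Prop :=
  LacksTheorems ℒ ∧ ∀ (Γ : Set (Fm L)) (φ : Fm L), Γ.Nonempty → ℒ.deriv Γ φ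

/-- Auxiliary: evaluation of a substituted formula. -/
theorem aux_subst_eval {L : Sig} (A : Alg L) (σ : ℕ → Fm L) (v : ℕ → A.carrier) :
    ∀ φ : Fm L, (Fm.subst σ φ).eval A v = φ.eval A (fun n => (σ n).eval A v)
  | .var n => rfl
  | .op f as => by
    simp only [Fm.subst, Fm.eval]
    congr 1
    funext i
    exact aux_subst_eval A σ v (as i)

/-- Auxiliary: in a signature where all arities are 0, evaluation of a formula with
variables among {0} depends only on the value at 0. -/
theorem aux_evalB2 {L : Sig} (A : Alg L) (h0 : ∀ f : L.Op, L.ar f = 0)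
    (φ : Fm L) (hφ : φ.vars ⊆ ({0} : Set ℕ)) (v w : ℕ → A.carrier)
    (hvw : v 0 = w 0) : φ.eval A v = φ.eval A w := by
  cases φ with
  | var n =>
    have hn : n = 0 := hφ (by simp [Fm.vars])
    subst hn
    exact hvw
  | op f as =>
    simp only [Fm.eval]
    congr 1
    funext i
    exact (Nat.not_lt_zero i.1 (h0 f ▸ i.isLt)).elim

/-- Auxiliary: if every operation evaluates to the constant `cv`, then every formula with
variables among {0} evaluates to `cv` under any valuation sending 0 to `cv`. -/
theorem aux_evalBc {L : Sig} (A : Alg L)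
    (cv : A.carrier)
    (hc : ∀ (f : L.Op) (as : Fin (L.ar f) → A.carrier), A.interp f as = cv)
    (φ : Fm L) (hφ : φ.vars ⊆ ({0} : Set ℕ)) (v : ℕ → A.carrier)
    (hv : v 0 = cv) : φ.eval A v = cv := by
  cases φ with
  | var n =>
    have hn : n = 0 := hφ (by simp [Fm.vars])
    subst hn
    exact hv
  | op f as => exact hc f _

/-- Every inconsistent logic has an algebraic semantics; an almost inconsistent logic has
one iff its language contains two distinct constants or a connective of arity ≥ 1. -/
theorem trivial_logics_alg_sem {L : Sig} (ℒ : Logic L) :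
    (Inconsistent ℒ → HasAlgSem ℒ) ∧
    (AlmostInconsistent ℒ →
      (HasAlgSem ℒ ↔
        ((∃ f g : L.Op, f ≠ g ∧ L.ar f = 0 ∧ L.ar g = 0) ∨
          ∃ f : L.Op, 1 ≤ L.ar f))) := by
  constructor
  · -- Inconsistent logics always have an algebraic semantics: take τ = {x ≈ x}, K = ∅.
    intro hInc
    refine ⟨{(Fm.var 0, Fm.var 0)}, ∅, ?_, ?_⟩
    · intro e he
      rw [Set.mem_singleton_iff] at he
      subst he
      constructor <;> simp [Fm.vars]
    · intro Γ φ
      constructor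
      · intro _ e _ A hA
        exact (Set.notMem_empty A hA).elim
      · intro _
        exact hInc Γ φ
  · intro hAI
    constructor
    · -- Forward direction: if an almost inconsistent logic has an algebraic semantics,
      -- the signature has two constants or a connective of positive arity.
      intro ⟨τ, K, hUni, hIff⟩
      by_contra hcon
      push_neg at hcon
      obtain ⟨hnc, hna⟩ := hcon
      have h0 : ∀ f : L.Op, L.ar f = 0 := fun f => by have := hna f; omega
      have hsub : ∀ f g : L.Op, f = g := by
        intro f g
        by_contra hfg
        exact hnc f g hfg (h0 f) (h0 g)
      -- From LacksTheorems, some equation of τ(x₀) fails somewhere.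
      have h1 : ¬ ∀ e ∈ tauApp τ (Fm.var 0), eqConseq K (tauAppSet τ ∅) e :=
        fun h => hAI.1 ⟨Fm.var 0, (hIff ∅ (Fm.var 0)).2 h⟩
      push_neg at h1
      obtain ⟨e, he, h2⟩ := h1
      rw [eqConseq] at h2
      push_neg at h2
      obtain ⟨A, hA, v, _, hne⟩ := h2
      obtain ⟨ε, hε, rfl⟩ := he
      by_cases hOp : Nonempty L.Op
      · -- There is a single constant; every op evaluates to the same value `cv`.
        obtain ⟨c⟩ := hOp
        have hc2 : ∀ (f g : L.Op) (as : Fin (L.ar f) → A.carrier)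
            (bs : Fin (L.ar g) → A.carrier), A.interp f as = A.interp g bs := by
          intro f g as bs
          have hfc : f = g := hsub f g
          subst hfc
          congr 1
          funext i
          exact (Nat.not_lt_zero i.1 (h0 f ▸ i.isLt)).elim
        obtain ⟨cv, hc⟩ : ∃ cv : A.carrier,
            ∀ (f : L.Op) (as : Fin (L.ar f) → A.carrier), A.interp f as = cv :=
          ⟨A.interp c (fun i => (Nat.not_lt_zero i.1 (h0 c ▸ i.isLt)).elim),
            fun f as => hc2 f c as _⟩
        -- {x₁} ⊢ x₀ holds, hence τ[{x₁}] ⊨_K τ(x₀).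
        have hD : ℒ.deriv {Fm.var 1} (Fm.var 0) :=
          hAI.2 _ _ (Set.singleton_nonempty _)
        have hE := (hIff {Fm.var 1} (Fm.var 0)).1 hD
          ⟨Fm.subst1 0 (Fm.var 0) ε.1, Fm.subst1 0 (Fm.var 0) ε.2⟩ ⟨ε, hε, rfl⟩
        -- Evaluate at v' := v with v' 1 := cv.
        set v' : ℕ → A.carrier := fun n => if n = 1 then cv else v n with hv'
        have hprem : ∀ p ∈ tauAppSet τ {Fm.var 1}, p.1.eval A v' = p.2.eval A v' := by
          intro p hp
          simp only [tauAppSet, Set.mem_iUnion] at hp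
          obtain ⟨γ, hγ, hpγ⟩ := hp
          rw [Set.mem_singleton_iff] at hγ
          subst hγ
          obtain ⟨δ, hδ, rfl⟩ := hpγ
          have hev : ∀ ψ : Fm L, ψ.vars ⊆ ({0} : Set ℕ) →
              (Fm.subst1 0 (Fm.var 1) ψ).eval A v' = cv := by
            intro ψ hψ
            rw [Fm.subst1, aux_subst_eval]
            exact aux_evalBc A cv hc ψ hψ _ (by simp [hv', Fm.eval])
          rw [hev δ.1 (hUni δ hδ).1, hev δ.2 (hUni δ hδ).2]
        have hcl := hE A hA v' hprem
        dsimp only at hcl hne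
        -- Conclusion transfers back to v, contradiction with hne.
        have key : ∀ ψ : Fm L, ψ.vars ⊆ ({0} : Set ℕ) →
            (Fm.subst1 0 (Fm.var 0) ψ).eval A v' = (Fm.subst1 0 (Fm.var 0) ψ).eval A v := by
          intro ψ hψ
          rw [Fm.subst1, aux_subst_eval, aux_subst_eval]
          exact aux_evalB2 A h0 ψ hψ _ _ (by simp [hv', Fm.eval])
        rw [key ε.1 (hUni ε hε).1, key ε.2 (hUni ε hε).2] at hcl
        exact hne hcl
      · -- No operations: every univalent formula is x₀, so the failing equation is trivial.
        have hvar : ∀ ψ : Fm L, ψ.vars ⊆ ({0} : Set ℕ) → ψ = Fm.var 0 := by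
          intro ψ hψ
          cases ψ with
          | var n =>
            have : n = 0 := hψ (by simp [Fm.vars])
            subst this; rfl
          | op f as => exact (hOp ⟨f⟩).elim
        dsimp only at hne
        rw [hvar ε.1 (hUni ε hε).1, hvar ε.2 (hUni ε hε).2] at hne
        exact hne rfl
    · -- Backward direction: build an algebraic semantics.
      rintro (⟨f, g, hfg, hf, hg⟩ | ⟨f, hf⟩)
      · -- Two distinct constants: τ = {f ≈ g}, K = a two-valued (Prop) algebra.
        set cf : Fm L := Fm.op f (fun _ => Fm.var 0) with hcf
        set cg : Fm L := Fm.op g (fun _ => Fm.var 0) with hcg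
        set A : Alg L := ⟨Prop, fun h _ => h = f⟩ with hA
        refine ⟨{(cf, cg)}, {A}, ?_, ?_⟩
        · intro e he
          rw [Set.mem_singleton_iff] at he
          subst he
          constructor <;>
          · simp only [hcf, hcg, Fm.vars]
            exact Set.iUnion_subset fun i => by simp [Fm.vars]
        · intro Γ φ
          have heval : ∀ (ψ : Fm L) (v : ℕ → A.carrier),
              ((Fm.subst1 0 ψ cf).eval A v = (f = f)) ∧
              ((Fm.subst1 0 ψ cg).eval A v = (g = f)) := by
            intro ψ v
            constructor <;> rfl
          constructor
          · intro hd e he A' hA' v hprem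
            rw [Set.mem_singleton_iff] at hA'
            subst hA'
            have hne : Γ.Nonempty := by
              rcases Set.eq_empty_or_nonempty Γ with h | h
              · subst h; exact (hAI.1 ⟨φ, hd⟩).elim
              · exact h
            obtain ⟨γ, hγ⟩ := hne
            have hp : ((Fm.subst1 0 γ cf), (Fm.subst1 0 γ cg)) ∈
                tauAppSet {(cf, cg)} Γ :=
              Set.mem_biUnion hγ ⟨(cf, cg), rfl, rfl⟩
            have := hprem _ hp
            rw [(heval γ v).1, (heval γ v).2] at this
            exact absurd (cast this rfl).symm hfg
          · intro h
            rcases Set.eq_empty_or_nonempty Γ with hΓ | hΓ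
            · subst hΓ
              have := h (Fm.subst1 0 φ cf, Fm.subst1 0 φ cg) ⟨(cf, cg), rfl, rfl⟩
                A rfl (fun _ => True) (by
                  intro p hp
                  simp [tauAppSet] at hp)
              rw [(heval φ _).1, (heval φ _).2] at this
              exact absurd (cast this rfl).symm hfg
            · exact hAI.2 Γ φ hΓ
      · -- A connective of positive arity: τ = {x₀ ≈ f(x₀,…,x₀)}, K = ℕ with successor.
        set A : Alg L := ⟨ℕ, fun h as => if hh : 1 ≤ L.ar h then as ⟨0, hh⟩ + 1 else 0⟩ with hA
        set tf : Fm L := Fm.op f (fun _ => Fm.var 0) with htf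
        refine ⟨{(Fm.var 0, tf)}, {A}, ?_, ?_⟩
        · intro e he
          rw [Set.mem_singleton_iff] at he
          subst he
          refine ⟨by simp [Fm.vars], ?_⟩
          simp only [htf, Fm.vars]
          exact Set.iUnion_subset fun i => by simp [Fm.vars]
        · intro Γ φ
          have heval : ∀ (ψ : Fm L) (v : ℕ → A.carrier),
              ((Fm.subst1 0 ψ (Fm.var 0)).eval A v = ψ.eval A v) ∧
              ((Fm.subst1 0 ψ tf).eval A v = ψ.eval A v + 1) := by
            intro ψ v
            constructor
            · simp [Fm.subst1, Fm.subst]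
            · show (Fm.op f fun _ => Fm.subst _ (Fm.var 0)).eval A v = _
              show (if hh : 1 ≤ L.ar f then _ else 0) = _
              rw [dif_pos hf]
              simp [Fm.subst]
          constructor
          · intro hd e he A' hA' v hprem
            rw [Set.mem_singleton_iff] at hA'
            subst hA'
            have hne : Γ.Nonempty := by
              rcases Set.eq_empty_or_nonempty Γ with h | h
              · subst h; exact (hAI.1 ⟨φ, hd⟩).elim
              · exact h
            obtain ⟨γ, hγ⟩ := hne
            have hp : ((Fm.subst1 0 γ (Fm.var 0)), (Fm.subst1 0 γ tf)) ∈
                tauAppSet {(Fm.var 0, tf)} Γ :=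
              Set.mem_biUnion hγ ⟨(Fm.var 0, tf), rfl, rfl⟩
            have := hprem _ hp
            rw [(heval γ v).1, (heval γ v).2] at this
            exact (Nat.succ_ne_self _ this.symm).elim
          · intro h
            rcases Set.eq_empty_or_nonempty Γ with hΓ | hΓ
            · subst hΓ
              have := h (Fm.subst1 0 φ (Fm.var 0), Fm.subst1 0 φ tf)
                ⟨(Fm.var 0, tf), rfl, rfl⟩ A rfl (fun _ => 0) (by
                  intro p hp
                  simp [tauAppSet] at hp)
              rw [(heval φ _).1, (heval φ _).2] at this
              exact (Nat.succ_ne_self _ this.symm).elim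
            · exact hAI.2 Γ φ hΓ
end
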